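/- For c ≠ 0, define f_c : ℝ² → ℝ by f_c(x, y) = 0.05(y − x²)² + (1 − x)² + c if x ≥ c, and f_c(x, y) = (x/c)(1 − x)² + 0.05(y − x²)² − ((1 − c)²/c)(x − c) + c if x < c. Then f_c is continuously differentiable (C¹) on all of ℝ². -/

import Mathlib

/-- `t ↦ t * |t|` has derivative `2 * |t|` everywhere. -/
lemma hasDerivAt_mul_abs (x : ℝ) : HasDerivAt (fun t : ℝ => t * |t|) (2 * |x|) x := by
  rcases lt_trichotomy x 0 with hx | hx | hx
  · have h : HasDerivAt (fun t : ℝ => -(t * t)) (2 * |x|) x := by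
      have := ((hasDerivAt_id x).mul (hasDerivAt_id x)).neg
      simpa [abs_of_neg hx, two_mul, Pi.mul_def, Pi.neg_def] using this
    refine h.congr_of_eventuallyEq ?_
    filter_upwards [Iio_mem_nhds hx] with t ht
    simp [abs_of_neg (Set.mem_Iio.mp ht)]
  · subst hx
    have : HasDerivAt (fun t : ℝ => t * |t|) 0 0 := by
      rw [hasDerivAt_iff_isLittleO_nhds_zero]
      rw [Asymptotics.isLittleO_iff]
      intro ε hε
      filter_upwards [Metric.ball_mem_nhds (0:ℝ) hε] with h hh
      simp only [Metric.mem_ball, dist_zero_right, Real.norm_eq_abs] at hh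
      simp only [zero_add, smul_eq_mul, mul_zero, abs_zero, sub_zero, Real.norm_eq_abs,
        abs_mul, abs_abs]
      exact mul_le_mul_of_nonneg_right hh.le (abs_nonneg _)
    simpa using this
  · have h : HasDerivAt (fun t : ℝ => t * t) (2 * |x|) x := by
      have := (hasDerivAt_id x).mul (hasDerivAt_id x)
      simpa [abs_of_pos hx, two_mul, Pi.mul_def] using this
    refine h.congr_of_eventuallyEq ?_
    filter_upwards [Ioi_mem_nhds hx] with t ht
    simp [abs_of_pos (Set.mem_Ioi.mp ht)]

lemma contDiff_mul_abs : ContDiff ℝ 1 (fun t : ℝ => t * |t|) := by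
  rw [contDiff_one_iff_deriv]
  constructor
  · exact fun x => (hasDerivAt_mul_abs x).differentiableAt
  · have : deriv (fun t : ℝ => t * |t|) = fun x => 2 * |x| := by
      funext x; exact (hasDerivAt_mul_abs x).deriv
    rw [this]
    exact continuous_const.mul continuous_abs

/-- The piecewise function `f_c` from the paper is continuously differentiable on all of ℝ². -/
theorem fc_contDiff_one (c : ℝ) (hc : c ≠ 0) (f : ℝ × ℝ → ℝ)
    (hf : ∀ x y : ℝ, f (x, y) =
      if c ≤ x then 0.05 * (y - x ^ 2) ^ 2 + (1 - x) ^ 2 + c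
      else (x / c) * (1 - x) ^ 2 + 0.05 * (y - x ^ 2) ^ 2 - ((1 - c) ^ 2 / c) * (x - c) + c) :
    ContDiff ℝ 1 f := by
  set q : ℝ → ℝ := fun t => (t ^ 2 + t * |t|) / 2 with hq
  have hfq : f = fun p : ℝ × ℝ =>
      0.05 * (p.2 - p.1 ^ 2) ^ 2 + (1 - p.1) ^ 2 + c
        - (1 / c) * q (c - p.1) * (2 - p.1 - c) := by
    funext p
    obtain ⟨x, y⟩ := p
    rw [hf x y]
    split_ifs with h
    · have habs : |c - x| = x - c := by
        rw [abs_of_nonpos (by linarith)]; ring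
      simp only [hq, habs]
      ring
    · push_neg at h
      have habs : |c - x| = c - x := abs_of_nonneg (by linarith)
      simp only [hq, habs]
      field_simp
      ring
  rw [hfq]
  have hqC : ContDiff ℝ 1 q := by
    have : ContDiff ℝ 1 (fun t : ℝ => t ^ 2 + t * |t|) :=
      (contDiff_id.pow 2).add contDiff_mul_abs
    exact this.div_const 2
  have h1 : ContDiff ℝ 1 (fun p : ℝ × ℝ => p.1) := contDiff_fst
  have h2 : ContDiff ℝ 1 (fun p : ℝ × ℝ => p.2) := contDiff_snd
  have hqc : ContDiff ℝ 1 (fun p : ℝ × ℝ => q (c - p.1)) :=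
    hqC.comp (contDiff_const.sub h1)
  exact ((contDiff_const.mul (((h2.sub (h1.pow 2)).pow 2)))).add
      (((contDiff_const.sub h1).pow 2)) |>.add contDiff_const
      |>.sub ((contDiff_const.mul hqc).mul (contDiff_const.sub h1 |>.sub contDiff_const))
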